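/- Let φ : M_m(ℂ) → M_n(ℂ) be a 2k-positive linear map (k ≥ 2) that is not completely positive. Then φ ⊗ id_k : M_m(ℂ) ⊗ M_k(ℂ) → M_n(ℂ) ⊗ M_k(ℂ) is positive but not decomposable. In particular, a 4-positive non-CP map φ yields a 2-positive indecomposable map φ ⊗ id_2. -/

import Mathlib

open scoped ComplexOrder Kronecker

/-- The amplification `(id_r ⊗ ψ)` of a linear map `ψ` between complex matrix algebras,
acting blockwise on an `r × r` block matrix (indices flattened). -/
def ampl {I J : Type*} [Fintype I] (ψ : Matrix I I ℂ →ₗ[ℂ] Matrix J J ℂ) (r : ℕ)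
    (M : Matrix (Fin r × I) (Fin r × I) ℂ) : Matrix (Fin r × J) (Fin r × J) ℂ :=
  Matrix.of fun p q => ψ (Matrix.of fun s t => M (p.1, s) (q.1, t)) p.2 q.2

/-- The amplification `(t_r ⊗ ψ)` (transpose on the outer factor):
block `(i, j)` of the output is `ψ` applied to block `(j, i)` of the input. -/
def amplT {I J : Type*} [Fintype I] (ψ : Matrix I I ℂ →ₗ[ℂ] Matrix J J ℂ) (r : ℕ)
    (M : Matrix (Fin r × I) (Fin r × I) ℂ) : Matrix (Fin r × J) (Fin r × J) ℂ :=
  Matrix.of fun p q => ψ (Matrix.of fun s t => M (q.1, s) (p.1, t)) p.2 q.2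

/-- `ψ` is `r`-positive: the `r`-th amplification preserves positive semidefiniteness. -/
def IsPositiveAt {I J : Type*} [Fintype I] [Fintype J]
    (ψ : Matrix I I ℂ →ₗ[ℂ] Matrix J J ℂ) (r : ℕ) : Prop :=
  ∀ M : Matrix (Fin r × I) (Fin r × I) ℂ, M.PosSemidef → (ampl ψ r M).PosSemidef

/-- `ψ` is completely positive. -/
def IsCompletelyPositive {I J : Type*} [Fintype I] [Fintype J]
    (ψ : Matrix I I ℂ →ₗ[ℂ] Matrix J J ℂ) : Prop :=
  ∀ r : ℕ, IsPositiveAt ψ r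

/-- `ψ` is completely copositive: every amplification `t_r ⊗ ψ` (with the transpose on
the outer factor) preserves positive semidefiniteness. -/
def IsCompletelyCopositive {I J : Type*} [Fintype I] [Fintype J]
    (ψ : Matrix I I ℂ →ₗ[ℂ] Matrix J J ℂ) : Prop :=
  ∀ (r : ℕ) (M : Matrix (Fin r × I) (Fin r × I) ℂ), M.PosSemidef → (amplT ψ r M).PosSemidef

/-- The map `φ ⊗ id_k` determined by `a ⊗ b ↦ φ a ⊗ b` (indices flattened). -/
def tensId {m n : ℕ} (φ : Matrix (Fin m) (Fin m) ℂ →ₗ[ℂ] Matrix (Fin n) (Fin n) ℂ)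
    (k : ℕ) (M : Matrix (Fin m × Fin k) (Fin m × Fin k) ℂ) :
    Matrix (Fin n × Fin k) (Fin n × Fin k) ℂ :=
  Matrix.of fun p q => φ (Matrix.of fun u v => M (u, p.2) (v, q.2)) p.1 q.1

open Matrix

section Aux

lemma quad_expand {ι : Type*} [Fintype ι] (M : Matrix ι ι ℂ) (z : ι → ℂ) :
    star z ⬝ᵥ M.mulVec z = ∑ r, ∑ c, (starRingEnd ℂ) (z r) * M r c * z c := by
  simp only [dotProduct, Matrix.mulVec, Pi.star_apply, Finset.mul_sum, mul_assoc]
  rfl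

lemma bilin_expand {ι : Type*} [Fintype ι] (M : Matrix ι ι ℂ) (y z : ι → ℂ) :
    star y ⬝ᵥ M.mulVec z = ∑ r, ∑ c, (starRingEnd ℂ) (y r) * M r c * z c := by
  simp only [dotProduct, Matrix.mulVec, Pi.star_apply, Finset.mul_sum, mul_assoc]
  rfl

/-- quadratic form identically zero implies zero matrix (over ℂ). -/
lemma quad_zero_eq_zero {ι : Type*} [Fintype ι] [DecidableEq ι]
    {M : Matrix ι ι ℂ} (h : ∀ x : ι → ℂ, star x ⬝ᵥ M.mulVec x = 0) : M = 0 := by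
  have key : ∀ (a b : ι) (c d : ℂ), a ≠ b →
      (starRingEnd ℂ) c * (M a a * c + M a b * d) + (starRingEnd ℂ) d * (M b a * c + M b b * d)
        = 0 := by
    intro a b c d hab
    have h2 := h (fun i => (if i = a then c else 0) + (if i = b then d else 0))
    have hz : star (fun i => (if i = a then c else 0) + (if i = b then d else 0))
        = fun i => (if i = a then (starRingEnd ℂ) c else 0)
          + (if i = b then (starRingEnd ℂ) d else 0) := by
      funext i
      simp only [Pi.star_apply, star_add, apply_ite star, star_zero, RCLike.star_def]
    have hmv : M.mulVec (fun i => (if i = a then c else 0) + (if i = b then d else 0))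
        = fun i => M i a * c + M i b * d := by
      funext i
      simp [Matrix.mulVec, dotProduct, mul_add, mul_ite, Finset.sum_add_distrib,
        Finset.sum_ite_eq']
    rw [hz, hmv] at h2
    simpa [dotProduct, add_mul, ite_mul, Finset.sum_add_distrib, Finset.sum_ite_eq',
      hab, Ne.symm hab] using h2
  have diag : ∀ a, M a a = 0 := by
    intro a
    have h2 := h (fun i => if i = a then 1 else 0)
    rw [quad_expand] at h2
    simpa [apply_ite star, ite_mul, mul_ite, Finset.sum_ite_eq', RCLike.star_def] using h2
  ext a b
  by_cases hab : a = b
  · subst hab; simpa using diag a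
  · have h1 := key a b 1 1 hab
    have hI := key a b 1 Complex.I hab
    rw [diag a, diag b] at h1 hI
    simp at h1 hI
    have h3 : M a b = M b a := by
      have h4 : Complex.I * (M a b - M b a) = 0 := by linear_combination hI
      have h5 := (mul_eq_zero.mp h4).resolve_left Complex.I_ne_zero
      linear_combination h5
    have : (2:ℂ) * M a b = 0 := by linear_combination h1 + h3
    simpa using (mul_eq_zero.mp this).resolve_left two_ne_zero

lemma sum4_comm {A B C D : Type*} [Fintype A] [Fintype B] [Fintype C] [Fintype D]
    (f : A → B → C → D → ℂ) :
    ∑ a, ∑ b, ∑ c, ∑ d, f a b c d = ∑ c, ∑ d, ∑ a, ∑ b, f a b c d := by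
  rw [show (∑ a, ∑ b, ∑ c, ∑ d, f a b c d)
      = ∑ ab : A × B, ∑ cd : C × D, f ab.1 ab.2 cd.1 cd.2 by
    rw [Fintype.sum_prod_type]
    refine Finset.sum_congr rfl fun a _ => ?_
    refine Finset.sum_congr rfl fun b _ => ?_
    rw [Fintype.sum_prod_type]]
  rw [Finset.sum_comm, Fintype.sum_prod_type]
  refine Finset.sum_congr rfl fun c _ => ?_
  refine Finset.sum_congr rfl fun d _ => ?_
  rw [Fintype.sum_prod_type]

lemma sum4_perm13 {A B C D : Type*} [Fintype A] [Fintype B] [Fintype C] [Fintype D]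
    (f : A → B → C → D → ℂ) :
    ∑ a, ∑ b, ∑ c, ∑ d, f a b c d = ∑ c, ∑ b, ∑ a, ∑ d, f a b c d := by
  calc ∑ a, ∑ b, ∑ c, ∑ d, f a b c d
      = ∑ a, ∑ c, ∑ b, ∑ d, f a b c d := Finset.sum_congr rfl fun a _ => Finset.sum_comm
    _ = ∑ c, ∑ a, ∑ b, ∑ d, f a b c d := Finset.sum_comm
    _ = ∑ c, ∑ b, ∑ a, ∑ d, f a b c d := Finset.sum_congr rfl fun c _ => Finset.sum_comm

/-- Collapsing a sum against indicator vectors located at the first components. -/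
lemma sumCollapseA {U S I T : Type*} [Fintype U] [Fintype S] [Fintype I] [Fintype T]
    [DecidableEq U] [DecidableEq I] (u₀ : U) (i₀ : I) (f : S → T → ℂ)
    (F : (U × S) × (I × T) → ℂ) :
    ∑ rr : (U × S) × (I × T),
        ((if rr.1.1 = u₀ then (1:ℂ) else 0) * (if rr.2.1 = i₀ then 1 else 0)
          * f rr.1.2 rr.2.2) * F rr
      = ∑ s, ∑ t, f s t * F ((u₀, s), (i₀, t)) := by
  simp only [Fintype.sum_prod_type]
  calc
    ∑ u, ∑ s, ∑ i, ∑ t, ((if u = u₀ then (1:ℂ) else 0) * (if i = i₀ then 1 else 0) * f s t)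
        * F ((u,s),(i,t))
        = ∑ u, (if u = u₀ then (1:ℂ) else 0) * ∑ s, ∑ i, ∑ t,
            ((if i = i₀ then (1:ℂ) else 0) * f s t) * F ((u,s),(i,t)) := by
          refine Finset.sum_congr rfl fun u _ => ?_
          rw [Finset.mul_sum]; refine Finset.sum_congr rfl fun s _ => ?_
          rw [Finset.mul_sum]; refine Finset.sum_congr rfl fun i _ => ?_
          rw [Finset.mul_sum]; refine Finset.sum_congr rfl fun t _ => ?_
          ring
    _ = ∑ s, ∑ i, ∑ t, ((if i = i₀ then (1:ℂ) else 0) * f s t) * F ((u₀,s),(i,t)) := by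
          simp [ite_mul, Finset.sum_ite_eq']
    _ = ∑ s, ∑ i, (if i = i₀ then (1:ℂ) else 0) * ∑ t, f s t * F ((u₀,s),(i,t)) := by
          refine Finset.sum_congr rfl fun s _ => Finset.sum_congr rfl fun i _ => ?_
          rw [Finset.mul_sum]; refine Finset.sum_congr rfl fun t _ => ?_; ring
    _ = ∑ s, ∑ t, f s t * F ((u₀, s), (i₀, t)) := by
          refine Finset.sum_congr rfl fun s _ => ?_
          simp [ite_mul, Finset.sum_ite_eq']

/-- Collapsing a sum against indicator vectors located at the second components. -/
lemma sumCollapseB {U S I T : Type*} [Fintype U] [Fintype S] [Fintype I] [Fintype T]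
    [DecidableEq S] [DecidableEq T] (s₀ : S) (t₀ : T) (f : U → I → ℂ)
    (F : (U × S) × (I × T) → ℂ) :
    ∑ rr : (U × S) × (I × T),
        ((if rr.1.2 = s₀ then (1:ℂ) else 0) * (if rr.2.2 = t₀ then 1 else 0)
          * f rr.1.1 rr.2.1) * F rr
      = ∑ u, ∑ i, f u i * F ((u, s₀), (i, t₀)) := by
  simp only [Fintype.sum_prod_type]
  calc
    ∑ u, ∑ s, ∑ i, ∑ t, ((if s = s₀ then (1:ℂ) else 0) * (if t = t₀ then 1 else 0) * f u i)
        * F ((u,s),(i,t))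
        = ∑ u, ∑ s, (if s = s₀ then (1:ℂ) else 0) * ∑ i, ∑ t,
            ((if t = t₀ then (1:ℂ) else 0) * f u i) * F ((u,s),(i,t)) := by
          refine Finset.sum_congr rfl fun u _ => Finset.sum_congr rfl fun s _ => ?_
          rw [Finset.mul_sum]; refine Finset.sum_congr rfl fun i _ => ?_
          rw [Finset.mul_sum]; refine Finset.sum_congr rfl fun t _ => ?_
          ring
    _ = ∑ u, ∑ i, ∑ t, ((if t = t₀ then (1:ℂ) else 0) * f u i) * F ((u,s₀),(i,t)) := by
          refine Finset.sum_congr rfl fun u _ => ?_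
          simp [ite_mul, Finset.sum_ite_eq']
    _ = ∑ u, ∑ i, f u i * F ((u, s₀), (i, t₀)) := by
          refine Finset.sum_congr rfl fun u _ => Finset.sum_congr rfl fun i _ => ?_
          simp [ite_mul, Finset.sum_ite_eq']

/-- Positivity at level `r` implies positivity at any level `s ≤ r`. -/
lemma IsPositiveAt.mono {m' n' : ℕ}
    {φ : Matrix (Fin m') (Fin m') ℂ →ₗ[ℂ] Matrix (Fin n') (Fin n') ℂ}
    {s r : ℕ} (hsr : s ≤ r) (h : IsPositiveAt φ r) : IsPositiveAt φ s := by
  intro M hM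
  set ι : Fin s → Fin r := Fin.castLE hsr with hι
  set V : Matrix (Fin r × Fin m') (Fin s × Fin m') ℂ :=
    Matrix.of (fun p q => if p.1 = ι q.1 ∧ p.2 = q.2 then 1 else 0) with hV
  have hM' : (V * M * Vᴴ).PosSemidef := hM.mul_mul_conjTranspose_same V
  have hent : ∀ (p q : Fin s) (u v : Fin m'),
      (V * M * Vᴴ) (ι p, u) (ι q, v) = M (p, u) (q, v) := by
    intro p q u v
    have hVe : ∀ (p' : Fin s) (u' : Fin m') (c : Fin s × Fin m'),
        V (ι p', u') c = if c = (p', u') then 1 else 0 := by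
      intro p' u' c
      have hiff : ((ι p', u').1 = ι c.1 ∧ (ι p', u').2 = c.2) ↔ c = (p', u') := by
        simp only [hι, Fin.castLE_inj]
        constructor
        · rintro ⟨h1, h2⟩; exact Prod.ext h1.symm h2.symm
        · rintro rfl; exact ⟨rfl, rfl⟩
      simp only [hV, Matrix.of_apply]
      rw [if_congr hiff rfl rfl]
    simp only [Matrix.mul_apply, Matrix.conjTranspose_apply, hVe]
    simp [ite_mul, mul_ite, apply_ite star, Finset.sum_ite_eq']
  have key : ampl φ s M = (ampl φ r (V * M * Vᴴ)).submatrix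
      (fun p => (ι p.1, p.2)) (fun p => (ι p.1, p.2)) := by
    ext p q
    have hinner : (Matrix.of fun u v => M (p.1, u) (q.1, v))
        = Matrix.of fun u v => (V * M * Vᴴ) (ι p.1, u) (ι q.1, v) := by
      ext u v
      exact (hent _ _ u v).symm
    simp only [ampl, Matrix.submatrix_apply, Matrix.of_apply, hinner]
  rw [key]
  exact (h _ hM').submatrix _

/-- The Choi matrix of a map. -/
def choi {I J : Type*} [Fintype I] [DecidableEq I]
    (ψ : Matrix I I ℂ →ₗ[ℂ] Matrix J J ℂ) : Matrix (I × J) (I × J) ℂ :=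
  Matrix.of fun x y => ψ (Matrix.single x.1 y.1 1) x.2 y.2

/-- The "copositive Choi matrix" of a map (input indices swapped). -/
def choiT {I J : Type*} [Fintype I] [DecidableEq I]
    (ψ : Matrix I I ℂ →ₗ[ℂ] Matrix J J ℂ) : Matrix (I × J) (I × J) ℂ :=
  Matrix.of fun x y => ψ (Matrix.single y.1 x.1 1) x.2 y.2

section ChoiPSD

variable {I J : Type*} [Fintype I] [Fintype J] [DecidableEq I]

private noncomputable def Umat (I : Type*) [Fintype I] [DecidableEq I] :
    Matrix Unit (Fin (Fintype.card I) × I) ℂ :=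
  Matrix.of fun _ p => if (Fintype.equivFin I) p.2 = p.1 then 1 else 0

private lemma Umat_entry (x y : I) (x' y' : I) :
    ((Umat I)ᴴ * (Umat I)) ((Fintype.equivFin I) x, x') ((Fintype.equivFin I) y, y')
      = Matrix.single x y (1:ℂ) x' y' := by
  simp only [Matrix.mul_apply, Matrix.conjTranspose_apply, Umat, Matrix.of_apply,
    Finset.univ_unique, Finset.sum_singleton, Matrix.single,
    EmbeddingLike.apply_eq_iff_eq]
  by_cases h1 : x' = x <;> by_cases h2 : y' = y <;>
    simp [h1, h2] <;> simp_all [eq_comm]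

lemma cp_choi_psd (ψ : Matrix I I ℂ →ₗ[ℂ] Matrix J J ℂ) (hψ : IsCompletelyPositive ψ) :
    (choi ψ).PosSemidef := by
  classical
  set e := Fintype.equivFin I with he
  have hE : ((Umat I)ᴴ * (Umat I)).PosSemidef := Matrix.posSemidef_conjTranspose_mul_self _
  have hampl := hψ (Fintype.card I) _ hE
  have key : choi ψ = (ampl ψ (Fintype.card I) ((Umat I)ᴴ * (Umat I))).submatrix
      (fun p => (e p.1, p.2)) (fun p => (e p.1, p.2)) := by
    ext x y
    have hinner : (Matrix.of fun x' y' =>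
        ((Umat I)ᴴ * (Umat I)) (e x.1, x') (e y.1, y'))
        = Matrix.single x.1 y.1 (1:ℂ) := by
      ext x' y'
      exact Umat_entry x.1 y.1 x' y'
    simp only [choi, ampl, Matrix.submatrix_apply, Matrix.of_apply, hinner]
  rw [key]
  exact hampl.submatrix _

lemma ccp_choi_psd (ψ : Matrix I I ℂ →ₗ[ℂ] Matrix J J ℂ) (hψ : IsCompletelyCopositive ψ) :
    (choiT ψ).PosSemidef := by
  classical
  set e := Fintype.equivFin I with he
  have hE : ((Umat I)ᴴ * (Umat I)).PosSemidef := Matrix.posSemidef_conjTranspose_mul_self _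
  have hampl := hψ (Fintype.card I) _ hE
  have key : choiT ψ = (amplT ψ (Fintype.card I) ((Umat I)ᴴ * (Umat I))).submatrix
      (fun p => (e p.1, p.2)) (fun p => (e p.1, p.2)) := by
    ext x y
    have hinner : (Matrix.of fun x' y' =>
        ((Umat I)ᴴ * (Umat I)) (e y.1, x') (e x.1, y'))
        = Matrix.single y.1 x.1 (1:ℂ) := by
      ext x' y'
      exact Umat_entry y.1 x.1 x' y'
    simp only [choiT, amplT, Matrix.submatrix_apply, Matrix.of_apply, hinner]
  rw [key]
  exact hampl.submatrix _

end ChoiPSD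

lemma psd_eq_conjTranspose_mul_self_aux {ι : Type*} [Fintype ι] [DecidableEq ι]
    {M : Matrix ι ι ℂ} (hM : M.PosSemidef) : ∃ B : Matrix ι ι ℂ, M = Bᴴ * B := by
  open scoped MatrixOrder in
  have h0 : 0 ≤ M := Matrix.nonneg_iff_posSemidef.mpr hM
  open scoped MatrixOrder in
  exact ⟨CFC.sqrt M, by
    rw [← Matrix.star_eq_conjTranspose, (CFC.sqrt_nonneg M).isSelfAdjoint.star_eq]
    exact (CFC.sqrt_mul_sqrt_self M h0).symm⟩

lemma cp_of_choi_psd {m' n' : ℕ}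
    (φ : Matrix (Fin m') (Fin m') ℂ →ₗ[ℂ] Matrix (Fin n') (Fin n') ℂ)
    (hC : (choi φ).PosSemidef) : IsCompletelyPositive φ := by
  intro r M hM
  obtain ⟨L, hL⟩ := psd_eq_conjTranspose_mul_self_aux hM
  obtain ⟨K, hK⟩ := psd_eq_conjTranspose_mul_self_aux hC
  set W : Matrix ((Fin r × Fin m') × ((Fin m' × Fin n'))) (Fin r × Fin n') ℂ :=
    Matrix.of (fun st p => ∑ u, L st.1 (p.1, u) * K st.2 (u, p.2)) with hW
  have key : ampl φ r M = Wᴴ * W := by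
    ext p q
    have hmat : (Matrix.of fun u v => M (p.1, u) (q.1, v))
        = ∑ uv : Fin m' × Fin m',
            M (p.1, uv.1) (q.1, uv.2) • Matrix.single uv.1 uv.2 (1:ℂ) := by
      ext a b
      simp [Matrix.sum_apply, Fintype.sum_prod_type, Matrix.single,
        mul_ite, mul_one, mul_zero, ite_and, Finset.sum_ite_eq, Finset.sum_ite_eq']
    have hLHS : ampl φ r M p q
        = ∑ uv : Fin m' × Fin m',
            M (p.1, uv.1) (q.1, uv.2) * choi φ (uv.1, p.2) (uv.2, q.2) := by
      simp only [ampl, Matrix.of_apply, hmat, _root_.map_sum, Matrix.sum_apply]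
      refine Finset.sum_congr rfl fun c _ => ?_
      rw [LinearMap.map_smul]
      simp [choi, Matrix.smul_apply]
    rw [hLHS, hL, hK]
    simp only [Matrix.mul_apply, Matrix.conjTranspose_apply, hW, Matrix.of_apply]
    calc
      ∑ uv : Fin m' × Fin m',
          (∑ s, star (L s (p.1, uv.1)) * L s (q.1, uv.2))
            * (∑ t, star (K t (uv.1, p.2)) * K t (uv.2, q.2))
          = ∑ u, ∑ v, ∑ s, ∑ t, (star (L s (p.1, u)) * L s (q.1, v))
              * (star (K t (u, p.2)) * K t (v, q.2)) := by
            rw [Fintype.sum_prod_type]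
            refine Finset.sum_congr rfl fun u _ => Finset.sum_congr rfl fun v _ => ?_
            rw [Finset.sum_mul_sum]
      _ = ∑ s, ∑ t, ∑ u, ∑ v, (star (L s (p.1, u)) * L s (q.1, v))
              * (star (K t (u, p.2)) * K t (v, q.2)) := sum4_comm _
      _ = ∑ st : (Fin r × Fin m') × (Fin m' × Fin n'),
            star (∑ u, L st.1 (p.1, u) * K st.2 (u, p.2))
              * ∑ v, L st.1 (q.1, v) * K st.2 (v, q.2) := by
            conv_rhs => rw [Fintype.sum_prod_type]
            refine Finset.sum_congr rfl fun s _ => Finset.sum_congr rfl fun t _ => ?_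
            rw [star_sum, Finset.sum_mul_sum]
            refine Finset.sum_congr rfl fun u _ => Finset.sum_congr rfl fun v _ => ?_
            simp only [star_mul', RCLike.star_def]
            ring
  rw [key]
  exact Matrix.posSemidef_conjTranspose_mul_self W

end Aux

section Main

variable {m n : ℕ} (k : ℕ)

/-- Piani–Mora: if `φ ⊗ id_k` is decomposable with `k ≥ 2`, then `φ` is completely
positive. -/
lemma cp_of_tensId_decomposable (hk : 2 ≤ k)
    (φ : Matrix (Fin m) (Fin m) ℂ →ₗ[ℂ] Matrix (Fin n) (Fin n) ℂ)
    (α β : Matrix (Fin m × Fin k) (Fin m × Fin k) ℂ →ₗ[ℂ]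
      Matrix (Fin n × Fin k) (Fin n × Fin k) ℂ)
    (hα : IsCompletelyPositive α) (hβ : IsCompletelyCopositive β)
    (hsum : ∀ M : Matrix (Fin m × Fin k) (Fin m × Fin k) ℂ, tensId φ k M = α M + β M) :
    IsCompletelyPositive φ := by
  classical
  set A := choi α with hAdef
  set G := choiT β with hGdef
  set C := choi φ with hCdef
  have hA : A.PosSemidef := cp_choi_psd α hα
  have hG : G.PosSemidef := ccp_choi_psd β hβ
  -- the basic entrywise equation
  have eqstar : ∀ (u v : Fin m) (s s' : Fin k) (i j : Fin n) (t t' : Fin k),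
      A ((u,s),(i,t)) ((v,s'),(j,t')) + G ((v,s'),(i,t)) ((u,s),(j,t'))
        = (if t = s then (1:ℂ) else 0) * (if t' = s' then 1 else 0) * C (u,i) (v,j) := by
    intro u v s s' i j t t'
    have h := congrFun (congrFun (hsum (Matrix.single (u,s) (v,s') 1)) (i,t)) (j,t')
    have hinner : (Matrix.of fun x y =>
        Matrix.single ((u : Fin m), s) (v, s') (1:ℂ) (x, t) (y, t'))
        = ((if t = s then (1:ℂ) else 0) * (if t' = s' then 1 else 0))
            • Matrix.single u v 1 := by
      ext x y
      simp only [Matrix.of_apply, Matrix.single, Matrix.smul_apply, smul_eq_mul,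
        Prod.mk.injEq]
      by_cases h1 : u = x <;> by_cases h2 : v = y <;> by_cases h3 : s = t <;>
        by_cases h4 : s' = t' <;> simp_all [eq_comm]
    have hL : tensId φ k (Matrix.single ((u : Fin m),s) (v,s') (1:ℂ)) (i,t) (j,t')
        = (if t = s then (1:ℂ) else 0) * (if t' = s' then 1 else 0) * C (u,i) (v,j) := by
      show φ (Matrix.of fun x y =>
        Matrix.single ((u : Fin m), s) (v, s') (1:ℂ) (x, t) (y, t')) i j = _
      rw [hinner, LinearMap.map_smul]
      simp only [hCdef, choi, Matrix.smul_apply, smul_eq_mul, Matrix.of_apply, mul_assoc]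
    rw [hL] at h
    simp only [Matrix.add_apply] at h
    simp only [hAdef, hGdef, choi, choiT, Matrix.of_apply]
    exact h.symm
  -- the key kernel property of A
  have keyA : ∀ (x : (Fin m × Fin k) × (Fin n × Fin k)) (v : Fin m) (j : Fin n)
      (a b : Fin k → ℂ), (∑ s, a s * b s) = 0 →
      (∑ s', ∑ t', a s' * b t' * A x ((v,s'),(j,t'))) = 0 := by
    intro x u₀ i₀ a b hab
    set z : (Fin m × Fin k) × (Fin n × Fin k) → ℂ := fun rr =>
      (if rr.1.1 = u₀ then (1:ℂ) else 0) * (if rr.2.1 = i₀ then 1 else 0)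
        * (a rr.1.2 * b rr.2.2) with hz
    set zG : (Fin m × Fin k) × (Fin n × Fin k) → ℂ := fun rr =>
      (if rr.1.1 = u₀ then (1:ℂ) else 0) * (if rr.2.1 = i₀ then 1 else 0)
        * ((starRingEnd ℂ) (a rr.1.2) * b rr.2.2) with hzG
    have hqA : star z ⬝ᵥ A *ᵥ z
        = ∑ s, ∑ t, ∑ s', ∑ t',
            (starRingEnd ℂ) (a s * b t) * (a s' * b t')
              * A ((u₀,s),(i₀,t)) ((u₀,s'),(i₀,t')) := by
      rw [quad_expand]
      have h1 : ∀ r : (Fin m × Fin k) × (Fin n × Fin k),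
          (∑ c, (starRingEnd ℂ) (z r) * A r c * z c)
          = ((if r.1.1 = u₀ then (1:ℂ) else 0) * (if r.2.1 = i₀ then 1 else 0)
              * ((starRingEnd ℂ) (a r.1.2) * (starRingEnd ℂ) (b r.2.2)))
            * (∑ c, ((if c.1.1 = u₀ then (1:ℂ) else 0) * (if c.2.1 = i₀ then 1 else 0)
                * (a c.1.2 * b c.2.2)) * A r c) := by
        intro r
        rw [Finset.mul_sum]
        refine Finset.sum_congr rfl fun c _ => ?_
        simp only [hz, _root_.map_mul, apply_ite (starRingEnd ℂ), _root_.map_one, _root_.map_zero]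
        ring
      simp only [h1]
      rw [sumCollapseA u₀ i₀ (fun s t => (starRingEnd ℂ) (a s) * (starRingEnd ℂ) (b t))
        (fun r => ∑ c, ((if c.1.1 = u₀ then (1:ℂ) else 0) * (if c.2.1 = i₀ then 1 else 0)
          * (a c.1.2 * b c.2.2)) * A r c)]
      refine Finset.sum_congr rfl fun s _ => Finset.sum_congr rfl fun t _ => ?_
      rw [sumCollapseA u₀ i₀ (fun s' t' => a s' * b t')
        (fun c => A ((u₀,s),(i₀,t)) c), Finset.mul_sum]
      refine Finset.sum_congr rfl fun s' _ => ?_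
      rw [Finset.mul_sum]
      refine Finset.sum_congr rfl fun t' _ => ?_
      simp only [_root_.map_mul]
      ring
    have hqG : star zG ⬝ᵥ G *ᵥ zG
        = ∑ s, ∑ t, ∑ s', ∑ t',
            (starRingEnd ℂ) ((starRingEnd ℂ) (a s) * b t) * ((starRingEnd ℂ) (a s') * b t')
              * G ((u₀,s),(i₀,t)) ((u₀,s'),(i₀,t')) := by
      rw [quad_expand]
      have h1 : ∀ r : (Fin m × Fin k) × (Fin n × Fin k),
          (∑ c, (starRingEnd ℂ) (zG r) * G r c * zG c)
          = ((if r.1.1 = u₀ then (1:ℂ) else 0) * (if r.2.1 = i₀ then 1 else 0)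
              * (a r.1.2 * (starRingEnd ℂ) (b r.2.2)))
            * (∑ c, ((if c.1.1 = u₀ then (1:ℂ) else 0) * (if c.2.1 = i₀ then 1 else 0)
                * ((starRingEnd ℂ) (a c.1.2) * b c.2.2)) * G r c) := by
        intro r
        rw [Finset.mul_sum]
        refine Finset.sum_congr rfl fun c _ => ?_
        simp only [hzG, _root_.map_mul, apply_ite (starRingEnd ℂ), _root_.map_one, _root_.map_zero,
          Complex.conj_conj, RingHomCompTriple.comp_apply, RingHom.id_apply]
        ring
      simp only [h1]
      rw [sumCollapseA u₀ i₀ (fun s t => a s * (starRingEnd ℂ) (b t))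
        (fun r => ∑ c, ((if c.1.1 = u₀ then (1:ℂ) else 0) * (if c.2.1 = i₀ then 1 else 0)
          * ((starRingEnd ℂ) (a c.1.2) * b c.2.2)) * G r c)]
      refine Finset.sum_congr rfl fun s _ => Finset.sum_congr rfl fun t _ => ?_
      rw [sumCollapseA u₀ i₀ (fun s' t' => (starRingEnd ℂ) (a s') * b t')
        (fun c => G ((u₀,s),(i₀,t)) c), Finset.mul_sum]
      refine Finset.sum_congr rfl fun s' _ => ?_
      rw [Finset.mul_sum]
      refine Finset.sum_congr rfl fun t' _ => ?_
      simp only [_root_.map_mul, Complex.conj_conj]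
      ring
    have hq0 : star z ⬝ᵥ A *ᵥ z + star zG ⬝ᵥ G *ᵥ zG = 0 := by
      rw [hqA, hqG]
      rw [sum4_perm13 (fun s t s' t' =>
        (starRingEnd ℂ) ((starRingEnd ℂ) (a s) * b t) * ((starRingEnd ℂ) (a s') * b t')
          * G ((u₀,s),(i₀,t)) ((u₀,s'),(i₀,t')))]
      have hcomb : ∀ (s t s' t' : Fin k),
          (starRingEnd ℂ) (a s * b t) * (a s' * b t')
              * A ((u₀,s),(i₀,t)) ((u₀,s'),(i₀,t'))
            + (starRingEnd ℂ) ((starRingEnd ℂ) (a s') * b t) * ((starRingEnd ℂ) (a s) * b t')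
              * G ((u₀,s'),(i₀,t)) ((u₀,s),(i₀,t'))
          = (starRingEnd ℂ) (a s * b t) * (a s' * b t')
              * ((if t = s then (1:ℂ) else 0) * (if t' = s' then 1 else 0)
                * C (u₀,i₀) (u₀,i₀)) := by
        intro s t s' t'
        have he := eqstar u₀ u₀ s s' i₀ i₀ t t'
        have hco : (starRingEnd ℂ) ((starRingEnd ℂ) (a s') * b t)
            * ((starRingEnd ℂ) (a s) * b t')
            = (starRingEnd ℂ) (a s * b t) * (a s' * b t') := by
          simp only [_root_.map_mul, Complex.conj_conj]
          ring
        rw [hco]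
        calc (starRingEnd ℂ) (a s * b t) * (a s' * b t')
              * A ((u₀,s),(i₀,t)) ((u₀,s'),(i₀,t'))
            + (starRingEnd ℂ) (a s * b t) * (a s' * b t')
              * G ((u₀,s'),(i₀,t)) ((u₀,s),(i₀,t'))
            = (starRingEnd ℂ) (a s * b t) * (a s' * b t')
              * (A ((u₀,s),(i₀,t)) ((u₀,s'),(i₀,t'))
                + G ((u₀,s'),(i₀,t)) ((u₀,s),(i₀,t'))) := by ring
          _ = _ := by rw [he]
      calc (∑ s, ∑ t, ∑ s', ∑ t', (starRingEnd ℂ) (a s * b t) * (a s' * b t')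
              * A ((u₀,s),(i₀,t)) ((u₀,s'),(i₀,t')))
            + ∑ s, ∑ t, ∑ s', ∑ t',
              (starRingEnd ℂ) ((starRingEnd ℂ) (a s') * b t) * ((starRingEnd ℂ) (a s) * b t')
                * G ((u₀,s'),(i₀,t)) ((u₀,s),(i₀,t'))
          = ∑ s, ∑ t, ∑ s', ∑ t', (starRingEnd ℂ) (a s * b t) * (a s' * b t')
              * ((if t = s then (1:ℂ) else 0) * (if t' = s' then 1 else 0)
                * C (u₀,i₀) (u₀,i₀)) := by
            rw [← Finset.sum_add_distrib]
            refine Finset.sum_congr rfl fun s _ => ?_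
            rw [← Finset.sum_add_distrib]
            refine Finset.sum_congr rfl fun t _ => ?_
            rw [← Finset.sum_add_distrib]
            refine Finset.sum_congr rfl fun s' _ => ?_
            rw [← Finset.sum_add_distrib]
            refine Finset.sum_congr rfl fun t' _ => ?_
            exact hcomb s t s' t'
        _ = 0 := by
            have hstep : ∀ s : Fin k, (∑ t, ∑ s', ∑ t',
                (starRingEnd ℂ) (a s * b t) * (a s' * b t')
                  * ((if t = s then (1:ℂ) else 0) * (if t' = s' then 1 else 0)
                    * C (u₀,i₀) (u₀,i₀)))
                = (starRingEnd ℂ) (a s * b s) * ((∑ s', a s' * b s') * C (u₀,i₀) (u₀,i₀)) := by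
              intro s
              have ht' : ∀ (t : Fin k) (s' : Fin k), (∑ t',
                  (starRingEnd ℂ) (a s * b t) * (a s' * b t')
                    * ((if t = s then (1:ℂ) else 0) * (if t' = s' then 1 else 0)
                      * C (u₀,i₀) (u₀,i₀)))
                  = (if t = s then (1:ℂ) else 0) * ((starRingEnd ℂ) (a s * b t)
                      * ((a s' * b s') * C (u₀,i₀) (u₀,i₀))) := by
                intro t s'
                rw [show (∑ t', (starRingEnd ℂ) (a s * b t) * (a s' * b t')
                    * ((if t = s then (1:ℂ) else 0) * (if t' = s' then 1 else 0)
                      * C (u₀,i₀) (u₀,i₀)))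
                  = ∑ t', (if t' = s' then (1:ℂ) else 0) * ((if t = s then (1:ℂ) else 0)
                      * ((starRingEnd ℂ) (a s * b t) * ((a s' * b t') * C (u₀,i₀) (u₀,i₀))))
                  from Finset.sum_congr rfl fun t' _ => by ring]
                simp [ite_mul, Finset.sum_ite_eq']
              simp only [ht']
              rw [show (∑ t, ∑ s', (if t = s then (1:ℂ) else 0)
                  * ((starRingEnd ℂ) (a s * b t) * ((a s' * b s') * C (u₀,i₀) (u₀,i₀))))
                = ∑ t, (if t = s then (1:ℂ) else 0)
                  * ((starRingEnd ℂ) (a s * b t)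
                      * ((∑ s', a s' * b s') * C (u₀,i₀) (u₀,i₀)))
                from Finset.sum_congr rfl fun t _ => by
                  rw [show (∑ s', a s' * b s') * C (u₀,i₀) (u₀,i₀)
                    = ∑ s', (a s' * b s') * C (u₀,i₀) (u₀,i₀) from Finset.sum_mul _ _ _,
                    Finset.mul_sum, Finset.mul_sum]]
              simp [ite_mul, Finset.sum_ite_eq']
            simp only [hstep]
            rw [hab]
            simp
    have hAz : star z ⬝ᵥ A *ᵥ z = 0 := by
      have h1 : star z ⬝ᵥ A *ᵥ z = - (star zG ⬝ᵥ G *ᵥ zG) :=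
        eq_neg_of_add_eq_zero_left hq0
      exact le_antisymm (h1 ▸ neg_nonpos.mpr (hG.dotProduct_mulVec_nonneg zG)) (hA.dotProduct_mulVec_nonneg z)
    have hker : A *ᵥ z = 0 := (hA.dotProduct_mulVec_zero_iff z).mp hAz
    have hrow := congrFun hker x
    have hrow' : (∑ c, ((if c.1.1 = u₀ then (1:ℂ) else 0) * (if c.2.1 = i₀ then 1 else 0)
        * (a c.1.2 * b c.2.2)) * A x c) = 0 := by
      rw [show (∑ c, ((if c.1.1 = u₀ then (1:ℂ) else 0) * (if c.2.1 = i₀ then 1 else 0)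
          * (a c.1.2 * b c.2.2)) * A x c) = ∑ c, A x c * z c
        from Finset.sum_congr rfl fun c _ => by rw [hz]; ring]
      exact hrow
    rw [sumCollapseA u₀ i₀ (fun s' t' => a s' * b t') (fun c => A x c)] at hrow'
    rw [show (∑ s', ∑ t', a s' * b t' * A x ((u₀,s'),(i₀,t')))
      = ∑ s', ∑ t', (fun s' t' => a s' * b t') s' t' * A x ((u₀,s'),(i₀,t'))
      from rfl]
    exact hrow'
  -- structure of A
  have E1 : ∀ (x : (Fin m × Fin k) × (Fin n × Fin k)) (v : Fin m) (j : Fin n)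
      (c d : Fin k), c ≠ d → A x ((v,c),(j,d)) = 0 := by
    intro x v j c d hcd
    have h := keyA x v j (fun s => if s = c then (1:ℂ) else 0)
      (fun s => if s = d then (1:ℂ) else 0)
      (by simp [ite_mul, mul_ite, Finset.sum_ite_eq', hcd]; exact Ne.symm hcd)
    simpa [ite_mul, mul_ite, Finset.sum_ite_eq'] using h
  have E2 : ∀ (x : (Fin m × Fin k) × (Fin n × Fin k)) (v : Fin m) (j : Fin n)
      (c d : Fin k), A x ((v,c),(j,c)) = A x ((v,d),(j,d)) := by
    intro x v j c d
    by_cases hcd : c = d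
    · rw [hcd]
    · have h := keyA x v j
        (fun s => (if s = c then (1:ℂ) else 0) + (if s = d then (1:ℂ) else 0))
        (fun s => (if s = c then (1:ℂ) else 0) - (if s = d then (1:ℂ) else 0))
        (by
          simp only [add_mul, mul_sub, ite_mul, mul_ite, one_mul, mul_one, zero_mul, mul_zero,
            Finset.sum_add_distrib, Finset.sum_sub_distrib, Finset.sum_ite_eq',
            Finset.mem_univ, if_true]
          simp [hcd, Ne.symm hcd])
      simp only [add_mul, sub_mul, mul_sub, mul_add, ite_mul, mul_ite, one_mul, mul_one,
        zero_mul, mul_zero, Finset.sum_add_distrib, Finset.sum_sub_distrib,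
        Finset.sum_ite_eq', Finset.mem_univ, if_true] at h
      have h1 := E1 x v j c d hcd
      have h2 := E1 x v j d c (Ne.symm hcd)
      linear_combination h - h2 + h1
  set c0 : Fin k := ⟨0, by omega⟩ with hc0
  set c1 : Fin k := ⟨1, by omega⟩ with hc1
  have hc01 : c0 ≠ c1 := by
    simp [hc0, hc1, Fin.ext_iff]
  set A2 : Matrix (Fin m × Fin n) (Fin m × Fin n) ℂ :=
    Matrix.of (fun p q => A ((p.1,c0),(p.2,c0)) ((q.1,c0),(q.2,c0))) with hA2def
  have E4 : ∀ (u v : Fin m) (s s' : Fin k) (i j : Fin n) (t t' : Fin k),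
      A ((u,s),(i,t)) ((v,s'),(j,t'))
        = (if s = t then (1:ℂ) else 0) * (if s' = t' then 1 else 0) * A2 (u,i) (v,j) := by
    intro u v s s' i j t t'
    by_cases h1 : s' = t'
    · subst h1
      by_cases h2 : s = t
      · subst h2
        have e1 : A ((u,s),(i,s)) ((v,s'),(j,s')) = A ((u,s),(i,s)) ((v,c0),(j,c0)) :=
          E2 _ v j s' c0
        have e2 : A ((u,s),(i,s)) ((v,c0),(j,c0))
            = star (A ((v,c0),(j,c0)) ((u,s),(i,s))) := (hA.1.apply _ _).symm
        have e3 : A ((v,c0),(j,c0)) ((u,s),(i,s)) = A ((v,c0),(j,c0)) ((u,c0),(i,c0)) :=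
          E2 _ u i s c0
        have e4 : A ((v,c0),(j,c0)) ((u,c0),(i,c0))
            = star (A ((u,c0),(i,c0)) ((v,c0),(j,c0))) := (hA.1.apply _ _).symm
        rw [e1, e2, e3, e4, star_star]
        simp [hA2def]
      · rw [← hA.1.apply, E1 _ u i s t h2, star_zero]
        simp [h2]
    · rw [E1 _ v j s' t' h1]
      simp [h1]
  have hA2 : A2.PosSemidef := by
    refine Matrix.PosSemidef.of_dotProduct_mulVec_nonneg ?_ ?_
    · apply Matrix.IsHermitian.ext
      intro p q
      simp only [hA2def, Matrix.of_apply]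
      exact hA.1.apply _ _
    · intro x
      set X : (Fin m × Fin k) × (Fin n × Fin k) → ℂ := fun rr =>
        (if rr.1.2 = c0 then (1:ℂ) else 0) * (if rr.2.2 = c0 then 1 else 0)
          * x (rr.1.1, rr.2.1) with hX
      have hquad : star x ⬝ᵥ A2 *ᵥ x = star X ⬝ᵥ A *ᵥ X := by
        rw [quad_expand, quad_expand]
        have h1 : ∀ r : (Fin m × Fin k) × (Fin n × Fin k),
            (∑ c, (starRingEnd ℂ) (X r) * A r c * X c)
            = ((if r.1.2 = c0 then (1:ℂ) else 0) * (if r.2.2 = c0 then 1 else 0)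
                * (starRingEnd ℂ) (x (r.1.1, r.2.1)))
              * (∑ c, ((if c.1.2 = c0 then (1:ℂ) else 0) * (if c.2.2 = c0 then 1 else 0)
                  * x (c.1.1, c.2.1)) * A r c) := by
          intro r
          rw [Finset.mul_sum]
          refine Finset.sum_congr rfl fun c _ => ?_
          simp only [hX, _root_.map_mul, apply_ite (starRingEnd ℂ), _root_.map_one,
            _root_.map_zero]
          ring
        simp only [h1]
        rw [sumCollapseB c0 c0 (fun u i => (starRingEnd ℂ) (x (u, i)))
          (fun r => ∑ c, ((if c.1.2 = c0 then (1:ℂ) else 0) * (if c.2.2 = c0 then 1 else 0)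
              * x (c.1.1, c.2.1)) * A r c)]
        have h2 : ∀ (u : Fin m) (i : Fin n),
            (∑ c : (Fin m × Fin k) × (Fin n × Fin k),
              ((if c.1.2 = c0 then (1:ℂ) else 0) * (if c.2.2 = c0 then 1 else 0)
                * x (c.1.1, c.2.1)) * A ((u,c0),(i,c0)) c)
            = ∑ v, ∑ j, x (v, j) * A ((u,c0),(i,c0)) ((v,c0),(j,c0)) := fun u i =>
          sumCollapseB c0 c0 (fun v j => x (v, j)) (fun c => A ((u,c0),(i,c0)) c)
        simp only [h2]
        simp only [Fintype.sum_prod_type]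
        refine Finset.sum_congr rfl fun u _ => Finset.sum_congr rfl fun i _ => ?_
        rw [Finset.mul_sum]
        refine Finset.sum_congr rfl fun v _ => ?_
        rw [Finset.mul_sum]
        refine Finset.sum_congr rfl fun j _ => ?_
        simp only [hA2def, Matrix.of_apply]
        ring
      rw [hquad]
      exact hA.dotProduct_mulVec_nonneg X
  -- final step: quadratic form vanishing
  have hc01' : c1 ≠ c0 := Ne.symm hc01
  have Gform : ∀ (u v : Fin m) (s s' : Fin k) (i j : Fin n) (t t' : Fin k),
      G ((u,s),(i,t)) ((v,s'),(j,t'))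
      = (if t = s' then (1:ℂ) else 0) * (if t' = s then 1 else 0) * C (v,i) (u,j)
        - (if s' = t then (1:ℂ) else 0) * (if s = t' then 1 else 0) * A2 (v,i) (u,j) := by
    intro u v s s' i j t t'
    have h := eqstar v u s' s i j t t'
    rw [E4 v u s' s i j t t'] at h
    linear_combination h
  set V : Fin k → Fin k → (Fin m × Fin n → ℂ)
      → ((Fin m × Fin k) × (Fin n × Fin k) → ℂ) := fun s₀ t₀ x rr =>
    (if rr.1.2 = s₀ then (1:ℂ) else 0) * (if rr.2.2 = t₀ then 1 else 0)
      * x (rr.1.1, rr.2.1) with hVdef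
  have mixed : ∀ (s₀ t₀ s₁ t₁ : Fin k) (x y : Fin m × Fin n → ℂ),
      star (V s₀ t₀ x) ⬝ᵥ G *ᵥ (V s₁ t₁ y)
      = ∑ u, ∑ i, ∑ v, ∑ j, (starRingEnd ℂ) (x (u,i)) * y (v,j)
          * G ((u,s₀),(i,t₀)) ((v,s₁),(j,t₁)) := by
    intro s₀ t₀ s₁ t₁ x y
    rw [bilin_expand]
    have h1 : ∀ r : (Fin m × Fin k) × (Fin n × Fin k),
        (∑ c, (starRingEnd ℂ) (V s₀ t₀ x r) * G r c * V s₁ t₁ y c)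
        = ((if r.1.2 = s₀ then (1:ℂ) else 0) * (if r.2.2 = t₀ then 1 else 0)
            * (starRingEnd ℂ) (x (r.1.1, r.2.1)))
          * (∑ c, ((if c.1.2 = s₁ then (1:ℂ) else 0) * (if c.2.2 = t₁ then 1 else 0)
              * y (c.1.1, c.2.1)) * G r c) := by
      intro r
      rw [Finset.mul_sum]
      refine Finset.sum_congr rfl fun c _ => ?_
      simp only [hVdef, _root_.map_mul, apply_ite (starRingEnd ℂ), _root_.map_one,
        _root_.map_zero]
      ring
    simp only [h1]
    rw [sumCollapseB s₀ t₀ (fun u i => (starRingEnd ℂ) (x (u, i)))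
      (fun r => ∑ c, ((if c.1.2 = s₁ then (1:ℂ) else 0) * (if c.2.2 = t₁ then 1 else 0)
          * y (c.1.1, c.2.1)) * G r c)]
    have h2 : ∀ (u : Fin m) (i : Fin n),
        (∑ c : (Fin m × Fin k) × (Fin n × Fin k),
          ((if c.1.2 = s₁ then (1:ℂ) else 0) * (if c.2.2 = t₁ then 1 else 0)
            * y (c.1.1, c.2.1)) * G ((u,s₀),(i,t₀)) c)
        = ∑ v, ∑ j, y (v, j) * G ((u,s₀),(i,t₀)) ((v,s₁),(j,t₁)) := fun u i =>
      sumCollapseB s₁ t₁ (fun v j => y (v, j)) (fun c => G ((u,s₀),(i,t₀)) c)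
    simp only [h2]
    refine Finset.sum_congr rfl fun u _ => Finset.sum_congr rfl fun i _ => ?_
    rw [Finset.mul_sum]
    refine Finset.sum_congr rfl fun v _ => ?_
    rw [Finset.mul_sum]
    refine Finset.sum_congr rfl fun j _ => ?_
    ring
  set Sx : (Fin m × Fin n → ℂ) → ℂ := fun x =>
    ∑ u, ∑ i, ∑ v, ∑ j, (starRingEnd ℂ) (x (u,i)) * x (v,j)
      * (C (v,i) (u,j) - A2 (v,i) (u,j)) with hSx
  have hS0 : ∀ x, Sx x = 0 := by
    intro x
    have hq : ∀ θ : ℂ, star (V c0 c1 x + θ • V c1 c0 x) ⬝ᵥ G *ᵥ (V c0 c1 x + θ • V c1 c0 x)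
        = (θ + (starRingEnd ℂ) θ) * Sx x := by
      intro θ
      have hsplit : star (V c0 c1 x + θ • V c1 c0 x) ⬝ᵥ G *ᵥ (V c0 c1 x + θ • V c1 c0 x)
          = star (V c0 c1 x) ⬝ᵥ G *ᵥ (V c0 c1 x)
            + θ * (star (V c0 c1 x) ⬝ᵥ G *ᵥ (V c1 c0 x))
            + (starRingEnd ℂ) θ * (star (V c1 c0 x) ⬝ᵥ G *ᵥ (V c0 c1 x))
            + (starRingEnd ℂ) θ * θ * (star (V c1 c0 x) ⬝ᵥ G *ᵥ (V c1 c0 x)) := by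
        simp only [star_add, star_smul, Matrix.mulVec_add, Matrix.mulVec_smul,
          add_dotProduct, dotProduct_add, smul_dotProduct,
          dotProduct_smul, smul_eq_mul, RCLike.star_def]
        ring
      have hq11 : star (V c0 c1 x) ⬝ᵥ G *ᵥ (V c0 c1 x) = 0 := by
        rw [mixed]
        simp [Gform, hc01, hc01']
      have hq22 : star (V c1 c0 x) ⬝ᵥ G *ᵥ (V c1 c0 x) = 0 := by
        rw [mixed]
        simp [Gform, hc01, hc01']
      have hq12 : star (V c0 c1 x) ⬝ᵥ G *ᵥ (V c1 c0 x) = Sx x := by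
        rw [mixed, hSx]
        refine Finset.sum_congr rfl fun u _ => Finset.sum_congr rfl fun i _ =>
          Finset.sum_congr rfl fun v _ => Finset.sum_congr rfl fun j _ => ?_
        rw [Gform]
        simp
      have hq21 : star (V c1 c0 x) ⬝ᵥ G *ᵥ (V c0 c1 x) = Sx x := by
        rw [mixed, hSx]
        refine Finset.sum_congr rfl fun u _ => Finset.sum_congr rfl fun i _ =>
          Finset.sum_congr rfl fun v _ => Finset.sum_congr rfl fun j _ => ?_
        rw [Gform]
        simp
      rw [hsplit, hq11, hq22, hq12, hq21]
      ring
    have h1 : 0 ≤ (2:ℂ) * Sx x := by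
      have h := hG.dotProduct_mulVec_nonneg (V c0 c1 x + (1:ℂ) • V c1 c0 x)
      rw [hq 1] at h
      have he : ((1:ℂ) + (starRingEnd ℂ) 1) = 2 := by norm_num
      rwa [he] at h
    have h2 : 0 ≤ (-2:ℂ) * Sx x := by
      have h := hG.dotProduct_mulVec_nonneg (V c0 c1 x + (-1:ℂ) • V c1 c0 x)
      rw [hq (-1)] at h
      have he : ((-1:ℂ) + (starRingEnd ℂ) (-1)) = -2 := by
        rw [map_neg, _root_.map_one]
        ring
      rwa [he] at h
    have h3 : (2:ℂ) * Sx x = 0 := by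
      refine le_antisymm ?_ h1
      have : -((2:ℂ) * Sx x) = (-2:ℂ) * Sx x := by ring
      rw [← neg_nonneg, this]
      exact h2
    have := mul_eq_zero.mp h3
    simpa using this
  set D : Matrix (Fin m × Fin n) (Fin m × Fin n) ℂ :=
    Matrix.of (fun p q => C (q.1, p.2) (p.1, q.2) - A2 (q.1, p.2) (p.1, q.2)) with hDdef
  have hDq : ∀ x, star x ⬝ᵥ D *ᵥ x = 0 := by
    intro x
    rw [quad_expand, ← hS0 x, hSx]
    simp only [Fintype.sum_prod_type]
    refine Finset.sum_congr rfl fun u _ => Finset.sum_congr rfl fun i _ => ?_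
    refine Finset.sum_congr rfl fun v _ => Finset.sum_congr rfl fun j _ => ?_
    simp only [hDdef, Matrix.of_apply]
    ring
  have hD0 : D = 0 := quad_zero_eq_zero hDq
  have final : ∀ (u v : Fin m) (i j : Fin n), C (u,i) (v,j) = A2 (u,i) (v,j) := by
    intro u v i j
    have h := congrFun (congrFun hD0 (v, i)) (u, j)
    simp only [hDdef, Matrix.of_apply, Matrix.zero_apply] at h
    linear_combination h
  have hC : C.PosSemidef := by
    have : C = A2 := by
      ext p q
      exact final p.1 q.1 p.2 q.2
    rw [this]; exact hA2
  exact cp_of_choi_psd φ hC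

end Main

theorem tensId_positive_not_decomposable {m n : ℕ} (k : ℕ) (hk : 2 ≤ k)
    (φ : Matrix (Fin m) (Fin m) ℂ →ₗ[ℂ] Matrix (Fin n) (Fin n) ℂ)
    (hφ2k : IsPositiveAt φ (2 * k)) (hφ : ¬ IsCompletelyPositive φ) :
    (∀ M : Matrix (Fin m × Fin k) (Fin m × Fin k) ℂ, M.PosSemidef →
        (tensId φ k M).PosSemidef) ∧
    ¬ ∃ α β : Matrix (Fin m × Fin k) (Fin m × Fin k) ℂ →ₗ[ℂ]
          Matrix (Fin n × Fin k) (Fin n × Fin k) ℂ,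
        IsCompletelyPositive α ∧ IsCompletelyCopositive β ∧
          ∀ M : Matrix (Fin m × Fin k) (Fin m × Fin k) ℂ, tensId φ k M = α M + β M := by
  constructor
  · intro M hM
    have hφk : IsPositiveAt φ k := IsPositiveAt.mono (by omega) hφ2k
    have hN : (M.submatrix (fun p : Fin k × Fin m => (p.2, p.1))
        (fun p : Fin k × Fin m => (p.2, p.1))).PosSemidef := hM.submatrix _
    have key : tensId φ k M
        = (ampl φ k (M.submatrix (fun p : Fin k × Fin m => (p.2, p.1))
            (fun p : Fin k × Fin m => (p.2, p.1)))).submatrix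
          (fun p : Fin n × Fin k => (p.2, p.1)) (fun p : Fin n × Fin k => (p.2, p.1)) := by
      ext p q
      simp only [tensId, ampl, Matrix.submatrix_apply, Matrix.of_apply]
    rw [key]
    exact (hφk _ hN).submatrix _
  · rintro ⟨α, β, hα, hβ, hsum⟩
    exact hφ (cp_of_tensId_decomposable k hk φ α β hα hβ hsum)
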